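/- arXiv:1808.01394 — 2 statements merged into one kernel-verified Lean document; each statement's English description precedes it below -/
import Mathlib

section
/- For every n ∈ ℕ, every δ ∈ (0,1), and every subset H ⊆ [n] with |H| > 8·ln(4/δ), the mechanism C_H is (ε, δ/2)-differentially private with ε = ln(1 + √(32·ln(4/δ)/|H|)): for all x, x' ∈ {0,1}^n differing in at most one coordinate and every set W ⊆ {0,1,…,n}, Pr[C_H(x) ∈ W] ≤ (1 + √(32·ln(4/δ)/|H|)) · Pr[C_H(x') ∈ W] + δ/2. -/
open scoped ENNReal Classical

noncomputable section

namespace ShuffledDP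

universe u v w

lemma half_le_one : (2⁻¹ : ℝ≥0∞) ≤ 1 := by
  simp [ENNReal.inv_le_one]

/-- Independent samples from a finite family of PMFs, collected (in order) as a list. -/
noncomputable def indep {α : Type u} : (n : ℕ) → (Fin n → PMF α) → PMF (List α)
  | 0, _ => PMF.pure []
  | n + 1, f =>
      (f 0).bind fun y => (indep n fun i => f i.succ).bind fun ys => PMF.pure (y :: ys)

/-- `(ε, δ)`-differential privacy of a mechanism `M` with respect to a
neighboring relation `nbr` on inputs. -/
def DPFor {I : Type u} {Z : Type v} (nbr : I → I → Prop) (M : I → PMF Z) (ε δ : ℝ) : Prop :=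
  ∀ x x', nbr x x' → ∀ T : Set Z,
    (M x).toOuterMeasure T ≤
      ENNReal.ofReal (Real.exp ε) * (M x').toOuterMeasure T + ENNReal.ofReal δ

/-- Two datasets are neighbors if they differ in at most one coordinate. -/
def Neighbor {n : ℕ} {X : Type u} (x x' : Fin n → X) : Prop :=
  ∃ j, ∀ i, i ≠ j → x i = x' i

/-- The randomized-response local randomizer `R_{n,λ}`: output the input bit with
probability `1 - λ/n` and a uniformly random bit with probability `λ/n`. -/
noncomputable def rr (n : ℕ) (lam : ℝ) (x : Bool) : PMF Bool :=
  (PMF.bernoulli (min (ENNReal.ofReal (lam / n)) 1).toNNReal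
      (by simpa using ENNReal.toNNReal_mono ENNReal.one_ne_top (min_le_right _ _))).bind fun b =>
    if b then PMF.bernoulli 2⁻¹ (by norm_num) else PMF.pure x

/-- Binomial distribution, valued in `ℕ`. -/
noncomputable def binom (p : ℝ≥0∞) (h : p ≤ 1) (m : ℕ) : PMF ℕ :=
  (PMF.binomial p.toNNReal (by simpa using ENNReal.toNNReal_mono ENNReal.one_ne_top h) m).map Fin.val

/-- Uniform distribution over the subsets of `Fin n` of size `s`. -/
noncomputable def uniformSubset (n s : ℕ) : PMF (Finset (Fin n)) :=
  if h : ((Finset.univ : Finset (Fin n)).powersetCard s).Nonempty then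
    PMF.uniformOfFinset _ h
  else PMF.pure ∅

/-- `∑_{i ∉ H} x_i` for a boolean dataset `x`. -/
def sumOutside {n : ℕ} (H : Finset (Fin n)) (x : Fin n → Bool) : ℕ :=
  ∑ i ∈ Hᶜ, (if x i then 1 else 0)

/-- The mechanism `C_H`: output `∑_{i ∉ H} x_i + B` with `B ~ Bin(|H|, 1/2)`. -/
noncomputable def CH (n : ℕ) (H : Finset (Fin n)) (x : Fin n → Bool) : PMF ℕ :=
  (binom 2⁻¹ half_le_one H.card).map fun B => sumOutside H x + B

/-- The mechanism `C_s`: sample `H` uniformly among size-`s` subsets, then run `C_H`. -/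
noncomputable def Cs (n s : ℕ) (x : Fin n → Bool) : PMF ℕ :=
  (uniformSubset n s).bind fun H => CH n H x

/-- The mechanism `C_λ`: sample `s ~ Bin(n, λ/n)`, then run `C_s`. -/
noncomputable def Cmech (n : ℕ) (lam : ℝ) (x : Fin n → Bool) : PMF ℕ :=
  (binom (min (ENNReal.ofReal (lam / n)) 1) (min_le_right _ _) n).bind fun s => Cs n s x

/-- The shuffled bit-sum mechanism `Π_{n,λ}`: the random multiset `{y_1, …, y_n}`
of the outputs `y_i ~ R_{n,λ}(x_i)`. -/
noncomputable def shuffleBit (n : ℕ) (lam : ℝ) (x : Fin n → Bool) : PMF (Multiset Bool) :=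
  (indep n fun i => rr n lam (x i)).map fun l => (l : Multiset Bool)

/-- The bit-sum protocol output `P_{n,λ}(x) = (n/(n-λ)) (∑ y_i - λ/2)`. -/
noncomputable def bitSumOutput (n : ℕ) (lam : ℝ) (x : Fin n → Bool) : PMF ℝ :=
  (indep n fun i => rr n lam (x i)).map fun l =>
    ((n : ℝ) / (n - lam)) * ((l.count true : ℝ) - lam / 2)

/-- The randomized-rounding encoder `E_r`. -/
noncomputable def encoder (r : ℕ) (x : ℝ) : PMF (Fin r → Bool) :=
  (PMF.bernoulli (min (ENNReal.ofReal (x * r - ⌈x * r⌉ + 1)) 1).toNNReal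
      (by simpa using ENNReal.toNNReal_mono ENNReal.one_ne_top (min_le_right _ _))).map
    fun b i => if ((i : ℕ) : ℤ) + 1 < ⌈x * r⌉ then true
      else if ((i : ℕ) : ℤ) + 1 = ⌈x * r⌉ then b else false

/-- The real-sum shuffled mechanism `Π^ℝ_{n,λ,r}`: the random multiset of all `n·r`
bits `y_{i,j} ~ R_{n,λ}(b_{i,j})` where `(b_{i,1},…,b_{i,r}) = E_r(x_i)`. -/
noncomputable def realShuffle (n : ℕ) (lam : ℝ) (r : ℕ) (X : Fin n → ℝ) :
    PMF (Multiset Bool) :=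
  (indep n fun i =>
      (encoder r (X i)).bind fun b =>
        (indep r fun j => rr n lam (b j)).map fun l => (l : Multiset Bool)).map
    fun ms => ms.sum

/-- The real-sum protocol output `z = (1/r)(n/(n-λ)) (∑_{i,j} y_{i,j} - λ r/2)`. -/
noncomputable def realOutput (n : ℕ) (lam : ℝ) (r : ℕ) (X : Fin n → ℝ) : PMF ℝ :=
  (realShuffle n lam r X).map fun m =>
    (1 / (r : ℝ)) * ((n : ℝ) / (n - lam)) * ((m.count true : ℝ) - lam * r / 2)

/-- The shuffled mechanism associated with a randomizer producing a multiset of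
messages: the union (multiset sum) of the `n` users' message multisets. -/
noncomputable def shuffM {𝒳 : Type u} {𝒴 : Type v} (n : ℕ) (R : 𝒳 → PMF (Multiset 𝒴))
    (x : Fin n → 𝒳) : PMF (Multiset 𝒴) :=
  (indep n fun i => R (x i)).map fun l => l.sum

/-- The multiset of the `m` messages output by an `m`-message randomizer. -/
noncomputable def vecR {𝒳 : Type u} {𝒴 : Type v} {m : ℕ} (R : 𝒳 → PMF (Fin m → 𝒴)) :
    𝒳 → PMF (Multiset 𝒴) :=
  fun a => (R a).map fun v => ((List.ofFn v : List 𝒴) : Multiset 𝒴)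

/-- The one-message shuffled mechanism `Π_R`: the random multiset `{R(x_1), …, R(x_n)}`. -/
noncomputable def shuffle1 {𝒳 : Type u} {𝒴 : Type v} (n : ℕ) (R : 𝒳 → PMF 𝒴)
    (x : Fin n → 𝒳) : PMF (Multiset 𝒴) :=
  (indep n fun i => R (x i)).map fun l => (l : Multiset 𝒴)

/-- `(ε, δ)`-differential privacy of a local randomizer (any two inputs are neighbors). -/
def RandDP {𝒳 : Type u} {𝒴 : Type v} (R : 𝒳 → PMF 𝒴) (ε δ : ℝ) : Prop :=
  ∀ x x' : 𝒳, ∀ T : Set 𝒴,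
    (R x).toOuterMeasure T ≤
      ENNReal.ofReal (Real.exp ε) * (R x').toOuterMeasure T + ENNReal.ofReal δ

/-- The output of the local protocol `(R, A)`. -/
noncomputable def localOut {𝒳 : Type u} {𝒴 : Type v} {𝒵 : Type w} (n : ℕ)
    (R : 𝒳 → PMF 𝒴) (A : List 𝒴 → 𝒵) (X : Fin n → 𝒳) : PMF 𝒵 :=
  (indep n fun i => R (X i)).map A

/-- `(a, b)`-accuracy of a protocol `P` for a function `f` w.r.t. a distance `d`. -/
def AccFor {I : Type u} {𝒵 : Type w} (P : I → PMF 𝒵) (f : I → 𝒵) (d : 𝒵 → 𝒵 → ℝ)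
    (a b : ℝ) : Prop :=
  ∀ X, ENNReal.ofReal (1 - b) ≤ (P X).toOuterMeasure {z | d z (f X) ≤ a}



/-! ### Auxiliary material for STATEMENT 3 -/

/-- The weight `C(m,k)/2^m` of the symmetric binomial distribution. -/
noncomputable def w (m k : ℕ) : ℝ := (m.choose k : ℝ) * (2⁻¹ : ℝ) ^ m

lemma w_nonneg (m k : ℕ) : 0 ≤ w m k := by unfold w; positivity

lemma binomial_half_apply (m : ℕ) (i : Fin (m+1)) (h : (2⁻¹ : ℝ≥0∞).toNNReal ≤ 1) :
    PMF.binomial (2⁻¹ : ℝ≥0∞).toNNReal h m i = ENNReal.ofReal (w m i) := by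
  have hp : (((2⁻¹ : ℝ≥0∞).toNNReal : NNReal) : ℝ≥0∞) = 2⁻¹ := ENNReal.coe_toNNReal (by simp)
  rw [PMF.binomial_apply, hp, ENNReal.one_sub_inv_two, Fin.val_last,
    ← pow_add, Nat.add_sub_cancel' (Fin.is_le i), w]
  rw [ENNReal.ofReal_mul (by positivity), ENNReal.ofReal_natCast,
    ENNReal.ofReal_pow (by norm_num)]
  rw [mul_comm]
  norm_num [ENNReal.ofReal_div_of_pos, ENNReal.ofReal_one, ENNReal.ofReal_ofNat]

lemma CH_eq (n : ℕ) (H : Finset (Fin n)) (x : Fin n → Bool) (W : Set ℕ) :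
    (CH n H x).toOuterMeasure W =
      ENNReal.ofReal (∑ k ∈ Finset.range (H.card + 1),
        if sumOutside H x + k ∈ W then w H.card k else 0) := by
  rw [CH, binom, PMF.toOuterMeasure_map_apply, PMF.toOuterMeasure_map_apply,
    PMF.toOuterMeasure_apply, tsum_fintype]
  rw [ENNReal.ofReal_sum_of_nonneg (fun k _ => by unfold w; positivity)]
  rw [← Fin.sum_univ_eq_sum_range (fun k =>
    ENNReal.ofReal (if sumOutside H x + k ∈ W then w H.card k else 0))]
  refine Finset.sum_congr rfl fun i _ => ?_
  rw [Set.indicator_apply]; erw [binomial_half_apply]; rw [apply_ite ENNReal.ofReal, ENNReal.ofReal_zero]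
  rfl

lemma tail_upper (m : ℕ) (hm : 0 < m) (a : ℝ) (ha : (m:ℝ)/2 ≤ a) :
    ∑ k ∈ Finset.range (m+1), (if a ≤ (k:ℝ) then w m k else 0)
      ≤ Real.exp (-2 * (a - (m:ℝ)/2)^2 / m) := by
  have hm0 : (0:ℝ) < m := by exact_mod_cast hm
  set lam : ℝ := 4 * (a - (m:ℝ)/2) / m with hlam
  have hlam0 : 0 ≤ lam := by
    apply div_nonneg _ hm0.le
    nlinarith
  set E : ℝ := Real.exp lam with hE
  have hE1 : (1:ℝ) ≤ E := Real.one_le_exp hlam0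
  -- step 1: pointwise bound
  have step1 : ∑ k ∈ Finset.range (m+1), (if a ≤ (k:ℝ) then w m k else 0)
      ≤ ∑ k ∈ Finset.range (m+1), w m k * Real.exp (lam * ((k:ℝ) - a)) := by
    apply Finset.sum_le_sum
    intro k _
    by_cases h : a ≤ (k:ℝ)
    · rw [if_pos h]
      nth_rewrite 1 [← mul_one (w m k)]
      apply mul_le_mul_of_nonneg_left _ (by unfold w; positivity)
      apply Real.one_le_exp
      apply mul_nonneg hlam0
      linarith
    · rw [if_neg h]
      exact mul_nonneg (by unfold w; positivity) (Real.exp_pos _).le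
  -- step 2: mgf computation
  have step2 : ∑ k ∈ Finset.range (m+1), w m k * Real.exp (lam * ((k:ℝ) - a))
      = Real.exp (-(lam * a)) * ((E + 1)/2)^m := by
    have : ∀ k ∈ Finset.range (m+1), w m k * Real.exp (lam * ((k:ℝ) - a))
        = Real.exp (-(lam*a)) * (2⁻¹:ℝ)^m * (E^k * 1^(m-k) * (m.choose k : ℝ)) := by
      intro k _
      rw [w, hE, one_pow, mul_sub, mul_comm lam (k:ℝ), Real.exp_sub, ← Real.exp_nat_mul,
        Real.exp_neg]
      field_simp
    rw [Finset.sum_congr rfl this, ← Finset.mul_sum, ← add_pow, div_pow, inv_pow]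
    ring
  -- step 3: hoeffding factor
  have step3 : ((E + 1)/2)^m ≤ Real.exp (m * (lam/2 + lam^2/8)) := by
    have h2 : Real.exp (lam/2) * Real.exp (lam/2) = E := by
      rw [hE, ← Real.exp_add]; norm_num
    have h3 : Real.exp (lam/2) * Real.exp (-(lam/2)) = 1 := by
      rw [← Real.exp_add]; simp
    have hc : (E + 1)/2 = Real.exp (lam/2) * Real.cosh (lam/2) := by
      rw [Real.cosh_eq]
      linear_combination (-(1:ℝ)/2) * h2 - (1/2 : ℝ) * h3
    have : (E + 1)/2 ≤ Real.exp (lam/2 + lam^2/8) := by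
      rw [hc, Real.exp_add]
      apply mul_le_mul_of_nonneg_left _ (Real.exp_pos _).le
      calc Real.cosh (lam/2) ≤ Real.exp ((lam/2)^2/2) := Real.cosh_le_exp_half_sq _
        _ = Real.exp (lam^2/8) := by ring_nf
    calc ((E+1)/2)^m ≤ (Real.exp (lam/2 + lam^2/8))^m := by
          apply pow_le_pow_left₀ (by positivity) this _
      _ = Real.exp (m * (lam/2 + lam^2/8)) := by
          rw [← Real.exp_nat_mul]
  -- combine
  have final : Real.exp (-(lam * a)) * Real.exp (m * (lam/2 + lam^2/8))
      = Real.exp (-2 * (a - (m:ℝ)/2)^2 / m) := by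
    rw [← Real.exp_add]
    congr 1
    rw [hlam]
    field_simp
    ring
  calc ∑ k ∈ Finset.range (m+1), (if a ≤ (k:ℝ) then w m k else 0)
      ≤ Real.exp (-(lam * a)) * ((E + 1)/2)^m := step1.trans step2.le
    _ ≤ Real.exp (-(lam * a)) * Real.exp (m * (lam/2 + lam^2/8)) := by
        apply mul_le_mul_of_nonneg_left step3 (Real.exp_pos _).le
    _ = _ := final

lemma tail_lower (m : ℕ) (hm : 0 < m) (a : ℝ) (ha : a ≤ (m:ℝ)/2)
    (hup : ∑ k ∈ Finset.range (m+1), (if (m:ℝ) - a ≤ (k:ℝ) then w m k else 0)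
      ≤ Real.exp (-2 * (((m:ℝ) - a) - (m:ℝ)/2)^2 / m)) :
    ∑ k ∈ Finset.range (m+1), (if (k:ℝ) ≤ a then w m k else 0)
      ≤ Real.exp (-2 * ((m:ℝ)/2 - a)^2 / m) := by
  have hre := Finset.sum_range_reflect (fun k => if (k:ℝ) ≤ a then w m k else 0) (m+1)
  rw [← hre]
  have hcong : ∀ k ∈ Finset.range (m+1),
      (if ((m + 1 - 1 - k : ℕ):ℝ) ≤ a then w m (m + 1 - 1 - k) else 0)
      = (if (m:ℝ) - a ≤ (k:ℝ) then w m k else 0) := by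
    intro k hk
    have hk' : k ≤ m := Nat.lt_succ_iff.mp (Finset.mem_range.mp hk)
    have h1 : m + 1 - 1 - k = m - k := by omega
    have h2 : ((m - k : ℕ):ℝ) = (m:ℝ) - k := by rw [Nat.cast_sub hk']
    have h3 : w m (m - k) = w m k := by rw [w, w, Nat.choose_symm hk']
    rw [h1, h2, h3]
    exact if_congr (by constructor <;> intro <;> linarith) rfl rfl
  rw [Finset.sum_congr rfl hcong]
  refine hup.trans (le_of_eq ?_)
  congr 1
  ring

lemma ratio_up (m k : ℕ) (K : ℝ) (hk : k + 1 ≤ m)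
    (h : (k:ℝ) + 1 ≤ K * ((m:ℝ) - k)) : w m k ≤ K * w m (k+1) := by
  have h2 : (0:ℝ) < (k:ℝ) + 1 := by positivity
  refine le_of_mul_le_mul_right ?_ h2
  have hcast : ((m - k : ℕ) : ℝ) = (m:ℝ) - k := by
    rw [Nat.cast_sub (by omega)]
  have hidR : (m.choose (k+1) : ℝ) * ((k:ℝ)+1) = (m.choose k : ℝ) * ((m:ℝ) - k) := by
    rw [← hcast]
    exact_mod_cast congrArg (Nat.cast (R := ℝ)) (Nat.choose_succ_right_eq m k)
  calc w m k * ((k:ℝ)+1) = (m.choose k : ℝ) * ((k:ℝ)+1) * (2⁻¹:ℝ)^m := by rw [w]; ring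
    _ ≤ (m.choose k : ℝ) * (K * ((m:ℝ)-k)) * (2⁻¹:ℝ)^m := by
        refine mul_le_mul_of_nonneg_right ?_ (by positivity)
        exact mul_le_mul_of_nonneg_left h (by positivity)
    _ = K * w m (k+1) * ((k:ℝ)+1) := by
        rw [w]
        linear_combination (-(K * ((2:ℝ)⁻¹)^m)) * hidR

lemma ratio_down (m k : ℕ) (K : ℝ) (hk1 : 1 ≤ k) (hk : k ≤ m)
    (h : (m:ℝ) - k + 1 ≤ K * k) : w m k ≤ K * w m (k-1) := by
  have h2 : (0:ℝ) < (k:ℝ) := by exact_mod_cast hk1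
  refine le_of_mul_le_mul_right ?_ h2
  have hid := Nat.choose_succ_right_eq m (k-1)
  have hk1' : k - 1 + 1 = k := by omega
  rw [hk1'] at hid
  -- hid : m.choose k * k = m.choose (k-1) * (m - (k-1))
  have hcast : ((m - (k-1) : ℕ) : ℝ) = (m:ℝ) - k + 1 := by
    have : m - (k-1) = m - k + 1 := by omega
    rw [this, Nat.cast_add, Nat.cast_sub hk]
    norm_num
  have hidR : (m.choose k : ℝ) * (k:ℝ) = (m.choose (k-1) : ℝ) * ((m:ℝ) - k + 1) := by
    rw [← hcast]
    exact_mod_cast congrArg (Nat.cast (R := ℝ)) hid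
  calc w m k * (k:ℝ) = (m.choose k : ℝ) * (k:ℝ) * (2⁻¹:ℝ)^m := by rw [w]; ring
    _ = (m.choose (k-1) : ℝ) * ((m:ℝ) - k + 1) * (2⁻¹:ℝ)^m := by rw [hidR]
    _ ≤ (m.choose (k-1) : ℝ) * (K * (k:ℝ)) * (2⁻¹:ℝ)^m := by
        refine mul_le_mul_of_nonneg_right ?_ (by positivity)
        exact mul_le_mul_of_nonneg_left h (by positivity)
    _ = K * w m (k-1) * (k:ℝ) := by rw [w]; ring

lemma mul_sqrt_eq (r x : ℝ) (hr : 0 ≤ r) : r * Real.sqrt x = Real.sqrt (r^2 * x) := by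
  rw [Real.sqrt_mul (by positivity), Real.sqrt_sq hr]

lemma key_ineq (m : ℕ) (del : ℝ) (h0 : 0 < del) (h1 : del < 1)
    (hm : 8 * Real.log (4/del) < (m:ℝ)) :
    ((m:ℝ)/2 + Real.sqrt ((m:ℝ) * Real.log (2/del) / 2) + 1
      ≤ (1 + Real.sqrt (32 * Real.log (4/del) / m)) *
        ((m:ℝ)/2 - Real.sqrt ((m:ℝ) * Real.log (2/del) / 2)))
    ∧ Real.sqrt ((m:ℝ) * Real.log (2/del) / 2) < (m:ℝ)/4 := by
  set g := Real.log 2 with hg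
  set L := Real.log (4/del) with hLdef
  set L2 := Real.log (2/del) with hL2def
  set c := Real.sqrt (32 * L / m) with hcdef
  set u := Real.sqrt ((m:ℝ) * L2 / 2) with hudef
  have hgpos : 0 < g := Real.log_pos one_lt_two
  have hg7 : 0.6931471803 < g := Real.log_two_gt_d9
  have hLL2 : L = L2 + g := by
    rw [hLdef, hL2def, hg, ← Real.log_mul (by positivity) (by norm_num)]
    congr 1
    field_simp
    ring
  have hL2pos : 0 < L2 := by
    rw [hL2def]
    apply Real.log_pos
    rw [lt_div_iff₀ h0]
    linarith
  have hLpos : 0 < L := by rw [hLL2]; linarith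
  have hLg : 2*g ≤ L := by
    rw [hLL2]
    have : g ≤ L2 := by
      rw [hg, hL2def]
      apply Real.log_le_log (by norm_num)
      rw [le_div_iff₀ h0]
      linarith
    linarith
  have hm0 : (0:ℝ) < m := lt_trans (by positivity) hm
  set A := Real.sqrt (2*L*(m:ℝ)) with hAdef
  have hA0 : 0 ≤ A := Real.sqrt_nonneg _
  have hA4L : 4*L ≤ A := by
    rw [hAdef, show (4*L) = Real.sqrt ((4*L)^2) from (Real.sqrt_sq (by positivity)).symm]
    apply Real.sqrt_le_sqrt
    nlinarith
  have hcm : c * ((m:ℝ)/2) = Real.sqrt (8*L*(m:ℝ)) := by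
    rw [hcdef, mul_comm, mul_sqrt_eq _ _ (by positivity)]
    congr 1
    field_simp
    ring
  have h2A : 2 * A = Real.sqrt (8*L*(m:ℝ)) := by
    rw [hAdef, mul_sqrt_eq _ _ (by norm_num)]
    congr 1
    ring
  have hcu : c * u = 4 * Real.sqrt (L*L2) := by
    rw [hcdef, hudef, ← Real.sqrt_mul (by positivity), mul_sqrt_eq 4 _ (by norm_num)]
    congr 1
    field_simp
    ring
  have hLL2le : Real.sqrt (L*L2) ≤ L := by
    have h := Real.sqrt_le_sqrt (show L*L2 ≤ L*L by nlinarith)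
    rwa [Real.sqrt_mul_self hLpos.le] at h
  have h2u : 2 * u = Real.sqrt (2*L2*(m:ℝ)) := by
    rw [hudef, mul_sqrt_eq _ _ (by norm_num)]
    congr 1
    field_simp
  have hq : 0 ≤ 1 - g/(2*L) := by
    rw [sub_nonneg, div_le_one (by positivity)]
    linarith
  have hAq0 : 0 ≤ A * (1 - g/(2*L)) := mul_nonneg hA0 hq
  have hsqle : Real.sqrt (2*L2*(m:ℝ)) ≤ A * (1 - g/(2*L)) := by
    have hA2 : A^2 = 2*L*(m:ℝ) := Real.sq_sqrt (by positivity)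
    have hsq : 2*L2*(m:ℝ) ≤ (A * (1 - g/(2*L)))^2 := by
      have hpow : (A * (1 - g/(2*L)))^2 = A^2 * (1 - g/(2*L))^2 := by ring
      have expand : 2*L*(m:ℝ)*(1 - g/(2*L))^2
          = 2*L*(m:ℝ) - 2*g*(m:ℝ) + g^2*(m:ℝ)/(2*L) := by
        field_simp
        ring
      rw [hpow, hA2, expand, hLL2]
      have hpos : 0 ≤ g^2*(m:ℝ)/(2*(L2+g)) := by positivity
      linarith
    calc Real.sqrt (2*L2*(m:ℝ)) ≤ Real.sqrt ((A * (1 - g/(2*L)))^2) := Real.sqrt_le_sqrt hsq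
      _ = A * (1 - g/(2*L)) := Real.sqrt_sq hAq0
  have hkey : 4*L + 1 ≤ A + A*(g/(2*L)) := by
    have h2g : (1:ℝ) ≤ 2*g := by linarith
    have hAg : 4*L*(g/(2*L)) ≤ A*(g/(2*L)) :=
      mul_le_mul_of_nonneg_right hA4L (by positivity)
    have heq : 4*L*(g/(2*L)) = 2*g := by
      field_simp
      ring
    linarith
  have hu0 : 0 ≤ u := Real.sqrt_nonneg _
  have hc0 : 0 ≤ c := Real.sqrt_nonneg _
  constructor
  · have hcm2A : c * ((m:ℝ)/2) = 2*A := hcm.trans h2A.symm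
    have h2u' : 2*u ≤ A*(1 - g/(2*L)) := h2u.le.trans hsqle
    have hcu' : c*u ≤ 4*L := by rw [hcu]; nlinarith
    have hAq : A*(1 - g/(2*L)) = A - A*(g/(2*L)) := by ring
    have expand : (1+c)*((m:ℝ)/2 - u) = (m:ℝ)/2 - u + c*((m:ℝ)/2) - c*u := by ring
    linarith [expand, hcm2A, h2u', hcu', hkey, hAq]
  · have : u < Real.sqrt (((m:ℝ)/4)^2) := by
      apply Real.sqrt_lt_sqrt (by positivity)
      nlinarith
    rwa [Real.sqrt_sq (by positivity)] at this

set_option maxHeartbeats 1000000 in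
lemma main_real (m : ℕ) (del : ℝ) (h0 : 0 < del) (h1 : del < 1)
    (hm : 8 * Real.log (4/del) < (m:ℝ)) (s s' : ℕ)
    (hss : s = s' ∨ s = s' + 1 ∨ s' = s + 1) (W : Set ℕ) :
    ∑ k ∈ Finset.range (m+1), (if s + k ∈ W then w m k else 0)
      ≤ (1 + Real.sqrt (32 * Real.log (4/del) / m)) *
          (∑ k ∈ Finset.range (m+1), (if s' + k ∈ W then w m k else 0)) + del/2 := by
  set L := Real.log (4/del) with hLdef
  set c := Real.sqrt (32 * L / m) with hcdef
  set L2 := Real.log (2/del) with hL2def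
  set u := Real.sqrt ((m:ℝ) * L2 / 2) with hudef
  have hc0 : 0 ≤ c := Real.sqrt_nonneg _
  have hu0 : 0 ≤ u := Real.sqrt_nonneg _
  have hm0 : (0:ℝ) < m := by
    have : 0 < L := by
      rw [hLdef]
      apply Real.log_pos
      rw [lt_div_iff₀ h0]
      linarith
    linarith
  have hmN : 0 < m := by exact_mod_cast hm0
  obtain ⟨key1, key2⟩ := key_ineq m del h0 h1 hm
  have hL2pos : 0 < L2 := by
    rw [hL2def]
    apply Real.log_pos
    rw [lt_div_iff₀ h0]
    linarith
  have hu2 : u^2 = (m:ℝ) * L2 / 2 := Real.sq_sqrt (by positivity)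
  have hexp : Real.exp (-2 * u^2 / m) = del/2 := by
    have harg : -2 * ((m:ℝ) * L2 / 2) / m = -L2 := by
      field_simp
    rw [hu2, harg, hL2def, Real.exp_neg, Real.exp_log (by positivity), inv_div]
  have hFnn : ∀ (t : ℕ) (k : ℕ), 0 ≤ (if t + k ∈ W then w m k else 0) := by
    intro t k
    by_cases h : t + k ∈ W
    · rw [if_pos h]; exact w_nonneg m k
    · rw [if_neg h]
  have hSnn : ∀ t : ℕ, 0 ≤ ∑ k ∈ Finset.range (m+1), (if t + k ∈ W then w m k else 0) :=
    fun t => Finset.sum_nonneg fun k _ => hFnn t k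
  rcases hss with rfl | hd | hd
  · -- equal case
    have := hSnn s
    nlinarith [mul_nonneg hc0 (hSnn s)]
  · -- s = s' + 1 : shift up, good set k ≤ m/2 + u
    set F : ℕ → ℝ := fun k => if s + k ∈ W then w m k else 0 with hF
    set F' : ℕ → ℝ := fun k => if s' + k ∈ W then w m k else 0 with hF'
    have hsplit := Finset.sum_filter_add_sum_filter_not (Finset.range (m+1))
      (fun k : ℕ => (k:ℝ) ≤ (m:ℝ)/2 + u) F
    -- bad part
    have hbad : ∑ k ∈ (Finset.range (m+1)).filter (fun k : ℕ => ¬ ((k:ℝ) ≤ (m:ℝ)/2 + u)), F k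
        ≤ del/2 := by
      have h1' : ∀ k ∈ (Finset.range (m+1)).filter (fun k : ℕ => ¬ ((k:ℝ) ≤ (m:ℝ)/2 + u)),
          F k ≤ (if (m:ℝ)/2 + u ≤ (k:ℝ) then w m k else 0) := by
        intro k hk
        have hk2 : ¬ ((k:ℝ) ≤ (m:ℝ)/2 + u) := (Finset.mem_filter.mp hk).2
        rw [if_pos (by linarith [lt_of_not_ge hk2])]
        simp only [hF]
        by_cases h : s + k ∈ W
        · rw [if_pos h]
        · rw [if_neg h]; exact w_nonneg m k
      calc ∑ k ∈ (Finset.range (m+1)).filter (fun k : ℕ => ¬ ((k:ℝ) ≤ (m:ℝ)/2 + u)), F k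
          ≤ ∑ k ∈ (Finset.range (m+1)).filter (fun k : ℕ => ¬ ((k:ℝ) ≤ (m:ℝ)/2 + u)),
            (if (m:ℝ)/2 + u ≤ (k:ℝ) then w m k else 0) := Finset.sum_le_sum h1'
        _ ≤ ∑ k ∈ Finset.range (m+1), (if (m:ℝ)/2 + u ≤ (k:ℝ) then w m k else 0) := by
            apply Finset.sum_le_sum_of_subset_of_nonneg (Finset.filter_subset _ _)
            intro k _ _
            by_cases h : (m:ℝ)/2 + u ≤ (k:ℝ)
            · rw [if_pos h]; exact w_nonneg m k
            · rw [if_neg h]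
        _ ≤ Real.exp (-2 * (((m:ℝ)/2 + u) - (m:ℝ)/2)^2 / m) :=
            tail_upper m hmN _ (by linarith)
        _ = del/2 := by rw [show ((m:ℝ)/2 + u) - (m:ℝ)/2 = u by ring, hexp]
    -- good part
    have hgood : ∑ k ∈ (Finset.range (m+1)).filter (fun k : ℕ => (k:ℝ) ≤ (m:ℝ)/2 + u), F k
        ≤ (1 + c) * ∑ k ∈ Finset.range (m+1), F' k := by
      have hmem : ∀ k ∈ (Finset.range (m+1)).filter (fun k : ℕ => (k:ℝ) ≤ (m:ℝ)/2 + u),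
          F k ≤ (1 + c) * F' (k+1) := by
        intro k hk
        obtain ⟨hkr, hku⟩ := Finset.mem_filter.mp hk
        have hkm : k + 1 ≤ m := by
          have : (k:ℝ) < m := by linarith [key2]
          exact_mod_cast Nat.succ_le_of_lt (by exact_mod_cast this)
        by_cases hW : s + k ∈ W
        · have hW' : s' + (k+1) ∈ W := by
            rw [show s' + (k+1) = s + k by omega]
            exact hW
          simp only [hF, hF', if_pos hW, if_pos hW']
          apply ratio_up m k (1+c) hkm
          have h1 : (k:ℝ) + 1 ≤ (m:ℝ)/2 + u + 1 := by linarith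
          have h2 : (m:ℝ)/2 - u ≤ (m:ℝ) - k := by linarith
          calc (k:ℝ) + 1 ≤ (1+c) * ((m:ℝ)/2 - u) := by linarith [key1]
            _ ≤ (1+c) * ((m:ℝ) - k) := by
                apply mul_le_mul_of_nonneg_left h2 (by linarith)
        · simp only [hF, if_neg hW]
          have : 0 ≤ F' (k+1) := hFnn s' (k+1)
          nlinarith
      calc ∑ k ∈ (Finset.range (m+1)).filter (fun k : ℕ => (k:ℝ) ≤ (m:ℝ)/2 + u), F k
          ≤ ∑ k ∈ (Finset.range (m+1)).filter (fun k : ℕ => (k:ℝ) ≤ (m:ℝ)/2 + u),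
            (1 + c) * F' (k+1) := Finset.sum_le_sum hmem
        _ = (1 + c) * ∑ k ∈ (Finset.range (m+1)).filter (fun k : ℕ => (k:ℝ) ≤ (m:ℝ)/2 + u),
            F' (k+1) := by rw [Finset.mul_sum]
        _ = (1 + c) * ∑ j ∈ ((Finset.range (m+1)).filter
              (fun k : ℕ => (k:ℝ) ≤ (m:ℝ)/2 + u)).image (· + 1), F' j := by
            rw [Finset.sum_image (fun x _ y _ h => by omega)]
        _ ≤ (1 + c) * ∑ j ∈ Finset.range (m+1), F' j := by
            apply mul_le_mul_of_nonneg_left _ (by linarith)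
            apply Finset.sum_le_sum_of_subset_of_nonneg
            · intro j hj
              obtain ⟨k, hk, rfl⟩ := Finset.mem_image.mp hj
              obtain ⟨hkr, hku⟩ := Finset.mem_filter.mp hk
              have : (k:ℝ) < m := by linarith [key2]
              have : k < m := by exact_mod_cast this
              exact Finset.mem_range.mpr (by omega)
            · intro j _ _
              exact hFnn s' j
    linarith [hsplit, hbad, hgood]
  · -- s' = s + 1 : shift down, good set k ≥ m/2 - u
    set F : ℕ → ℝ := fun k => if s + k ∈ W then w m k else 0 with hF
    set F' : ℕ → ℝ := fun k => if s' + k ∈ W then w m k else 0 with hF'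
    have hsplit := Finset.sum_filter_add_sum_filter_not (Finset.range (m+1))
      (fun k : ℕ => (m:ℝ)/2 - u ≤ (k:ℝ)) F
    have hbad : ∑ k ∈ (Finset.range (m+1)).filter (fun k : ℕ => ¬ ((m:ℝ)/2 - u ≤ (k:ℝ))), F k
        ≤ del/2 := by
      have h1' : ∀ k ∈ (Finset.range (m+1)).filter (fun k : ℕ => ¬ ((m:ℝ)/2 - u ≤ (k:ℝ))),
          F k ≤ (if (k:ℝ) ≤ (m:ℝ)/2 - u then w m k else 0) := by
        intro k hk
        have hk2 : ¬ ((m:ℝ)/2 - u ≤ (k:ℝ)) := (Finset.mem_filter.mp hk).2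
        rw [if_pos (by linarith [lt_of_not_ge hk2])]
        simp only [hF]
        by_cases h : s + k ∈ W
        · rw [if_pos h]
        · rw [if_neg h]; exact w_nonneg m k
      calc ∑ k ∈ (Finset.range (m+1)).filter (fun k : ℕ => ¬ ((m:ℝ)/2 - u ≤ (k:ℝ))), F k
          ≤ ∑ k ∈ (Finset.range (m+1)).filter (fun k : ℕ => ¬ ((m:ℝ)/2 - u ≤ (k:ℝ))),
            (if (k:ℝ) ≤ (m:ℝ)/2 - u then w m k else 0) := Finset.sum_le_sum h1'
        _ ≤ ∑ k ∈ Finset.range (m+1), (if (k:ℝ) ≤ (m:ℝ)/2 - u then w m k else 0) := by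
            apply Finset.sum_le_sum_of_subset_of_nonneg (Finset.filter_subset _ _)
            intro k _ _
            by_cases h : (k:ℝ) ≤ (m:ℝ)/2 - u
            · rw [if_pos h]; exact w_nonneg m k
            · rw [if_neg h]
        _ ≤ Real.exp (-2 * ((m:ℝ)/2 - ((m:ℝ)/2 - u))^2 / m) := by
            apply tail_lower m hmN _ (by linarith)
            have := tail_upper m hmN ((m:ℝ) - ((m:ℝ)/2 - u)) (by linarith)
            exact this
        _ = del/2 := by rw [show (m:ℝ)/2 - ((m:ℝ)/2 - u) = u by ring, hexp]
    have hgood : ∑ k ∈ (Finset.range (m+1)).filter (fun k : ℕ => (m:ℝ)/2 - u ≤ (k:ℝ)), F k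
        ≤ (1 + c) * ∑ k ∈ Finset.range (m+1), F' k := by
      have hupos : (0:ℝ) < (m:ℝ)/2 - u := by linarith [key2]
      have hmem : ∀ k ∈ (Finset.range (m+1)).filter (fun k : ℕ => (m:ℝ)/2 - u ≤ (k:ℝ)),
          F k ≤ (1 + c) * F' (k-1) := by
        intro k hk
        obtain ⟨hkr, hku⟩ := Finset.mem_filter.mp hk
        have hk1 : 1 ≤ k := by
          by_contra h
          have : k = 0 := by omega
          rw [this] at hku
          simp at hku
          linarith
        have hkm : k ≤ m := Nat.lt_succ_iff.mp (Finset.mem_range.mp hkr)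
        by_cases hW : s + k ∈ W
        · have hW' : s' + (k-1) ∈ W := by
            rw [show s' + (k-1) = s + k by omega]
            exact hW
          simp only [hF, hF', if_pos hW, if_pos hW']
          apply ratio_down m k (1+c) hk1 hkm
          calc (m:ℝ) - k + 1 ≤ (m:ℝ)/2 + u + 1 := by linarith
            _ ≤ (1+c) * ((m:ℝ)/2 - u) := key1
            _ ≤ (1+c) * k := by
                apply mul_le_mul_of_nonneg_left (by linarith) (by linarith)
        · simp only [hF, if_neg hW]
          have : 0 ≤ F' (k-1) := hFnn s' (k-1)
          nlinarith
      calc ∑ k ∈ (Finset.range (m+1)).filter (fun k : ℕ => (m:ℝ)/2 - u ≤ (k:ℝ)), F k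
          ≤ ∑ k ∈ (Finset.range (m+1)).filter (fun k : ℕ => (m:ℝ)/2 - u ≤ (k:ℝ)),
            (1 + c) * F' (k-1) := Finset.sum_le_sum hmem
        _ = (1 + c) * ∑ k ∈ (Finset.range (m+1)).filter (fun k : ℕ => (m:ℝ)/2 - u ≤ (k:ℝ)),
            F' (k-1) := by rw [Finset.mul_sum]
        _ = (1 + c) * ∑ j ∈ ((Finset.range (m+1)).filter
              (fun k : ℕ => (m:ℝ)/2 - u ≤ (k:ℝ))).image (· - 1), F' j := by
            have hinj : ∀ x ∈ (Finset.range (m+1)).filter (fun k : ℕ => (m:ℝ)/2 - u ≤ (k:ℝ)),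
                ∀ y ∈ (Finset.range (m+1)).filter (fun k : ℕ => (m:ℝ)/2 - u ≤ (k:ℝ)),
                x - 1 = y - 1 → x = y := by
              intro x hx y hy h
              obtain ⟨hxr, hxu⟩ := Finset.mem_filter.mp hx
              obtain ⟨hyr, hyu⟩ := Finset.mem_filter.mp hy
              have hx1 : 1 ≤ x := by
                by_contra hc'
                have hx0 : x = 0 := by omega
                rw [hx0] at hxu
                simp only [Nat.cast_zero] at hxu
                linarith
              have hy1 : 1 ≤ y := by
                by_contra hc'
                have hy0 : y = 0 := by omega
                rw [hy0] at hyu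
                simp only [Nat.cast_zero] at hyu
                linarith
              omega
            rw [Finset.sum_image hinj]
        _ ≤ (1 + c) * ∑ j ∈ Finset.range (m+1), F' j := by
            apply mul_le_mul_of_nonneg_left _ (by linarith)
            apply Finset.sum_le_sum_of_subset_of_nonneg
            · intro j hj
              obtain ⟨k, hk, rfl⟩ := Finset.mem_image.mp hj
              have := Finset.mem_range.mp (Finset.mem_filter.mp hk).1
              exact Finset.mem_range.mpr (by omega)
            · intro j _ _
              exact hFnn s' j
    linarith [hsplit, hbad, hgood]

lemma sumOutside_cases {n : ℕ} (H : Finset (Fin n)) (x x' : Fin n → Bool)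
    (hN : Neighbor x x') :
    sumOutside H x = sumOutside H x' ∨ sumOutside H x = sumOutside H x' + 1 ∨
      sumOutside H x' = sumOutside H x + 1 := by
  obtain ⟨j, hj⟩ := hN
  by_cases hjH : j ∈ Hᶜ
  · have h1 : sumOutside H x
        = ∑ i ∈ Hᶜ.erase j, (if x i then 1 else 0) + (if x j then 1 else 0) :=
      (Finset.sum_erase_add _ _ hjH).symm
    have h2 : sumOutside H x'
        = ∑ i ∈ Hᶜ.erase j, (if x' i then 1 else 0) + (if x' j then 1 else 0) :=
      (Finset.sum_erase_add _ _ hjH).symm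
    have heq : ∑ i ∈ Hᶜ.erase j, ((if x i then 1 else 0) : ℕ)
        = ∑ i ∈ Hᶜ.erase j, (if x' i then 1 else 0) := by
      refine Finset.sum_congr rfl fun i hi => ?_
      rw [hj i (Finset.ne_of_mem_erase hi)]
    rw [h1, h2, heq]
    cases hx : x j <;> cases hx' : x' j <;> simp
  · left
    refine Finset.sum_congr rfl fun i hi => ?_
    have hij : i ≠ j := fun h => hjH (h ▸ hi)
    rw [hj i hij]


/-- for `H ⊆ [n]` with `|H| > 8 ln(4/δ)`, the mechanism `C_H` is
`(ln(1 + √(32 ln(4/δ)/|H|)), δ/2)`-DP. -/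
theorem stmt3 (n : ℕ) (del : ℝ) (hdel : del ∈ Set.Ioo (0 : ℝ) 1) (H : Finset (Fin n))
    (hH : 8 * Real.log (4 / del) < (H.card : ℝ)) :
    ∀ x x' : Fin n → Bool, Neighbor x x' → ∀ W : Set ℕ,
      (CH n H x).toOuterMeasure W ≤
        ENNReal.ofReal (1 + Real.sqrt (32 * Real.log (4 / del) / H.card)) *
          (CH n H x').toOuterMeasure W + ENNReal.ofReal (del / 2) := by
  obtain ⟨hd0, hd1⟩ := hdel
  intro x x' hN W
  rw [CH_eq, CH_eq]
  have hmain := main_real H.card del hd0 hd1 hH (sumOutside H x) (sumOutside H x')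
    (sumOutside_cases H x x' hN) W
  have hc0 : (0:ℝ) ≤ 1 + Real.sqrt (32 * Real.log (4 / del) / H.card) := by positivity
  have hS'nn : (0:ℝ) ≤ ∑ k ∈ Finset.range (H.card + 1),
      (if sumOutside H x' + k ∈ W then w H.card k else 0) :=
    Finset.sum_nonneg fun k _ => by
      by_cases h : sumOutside H x' + k ∈ W
      · rw [if_pos h]; exact w_nonneg _ _
      · rw [if_neg h]
  refine le_trans (ENNReal.ofReal_le_ofReal hmain) ?_
  rw [ENNReal.ofReal_add (mul_nonneg hc0 hS'nn) (by linarith : (0:ℝ) ≤ del/2),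
    ENNReal.ofReal_mul hc0]


end ShuffledDP
end
end

section
/- For every n ∈ ℕ, every β ∈ (0,1), every λ with 2·ln(2/β) ≤ λ < n, and every x ∈ {0,1}^n, the bit-sum protocol output satisfies Pr[ |P_{n,λ}(x) − ∑_{i=1}^n x_i| > √(2λ·ln(2/β)) · n/(n−λ) ] ≤ β. -/
open scoped ENNReal Classical

noncomputable section

namespace ShuffledDP

universe u v w

section Stmt8Aux

lemma exp_le_quad {u : ℝ} (hu : |u| ≤ 1) : Real.exp u ≤ 1 + u + u ^ 2 := by
  have h := Real.exp_bound hu (n := 2) (by norm_num)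
  have h2 : ∑ m ∈ Finset.range 2, u ^ m / m.factorial = 1 + u := by
    simp [Finset.sum_range_succ]
  rw [h2] at h
  have h3 : |u| ^ 2 * ((Nat.succ 2 : ℕ) / ((Nat.factorial 2 : ℕ) * (2:ℕ) : ℝ)) = u ^ 2 * (3/4) := by
    rw [sq_abs]; norm_num [Nat.factorial]
  rw [h3] at h
  have := (abs_sub_le_iff.1 h).1
  nlinarith [sq_nonneg u]

lemma key_factor {q u p : ℝ} (hq : 0 ≤ q) (hu : |u| ≤ 1) (hp : p = q ∨ p = 1 - q) :
    p * Real.exp u + (1 - p) ≤ Real.exp (p * u + q * u ^ 2) := by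
  have hround : ∀ v : ℝ, |v| ≤ 1 → q * (Real.exp v - 1) ≤ q * v + q * v ^ 2 := by
    intro v hv
    have := exp_le_quad hv
    nlinarith
  have hadd : ∀ v : ℝ, 1 + v ≤ Real.exp v := fun v => by
    linarith [Real.add_one_le_exp v]
  rcases hp with h | h
  · rw [h]
    have h1 : q * Real.exp u + (1 - q) = 1 + q * (Real.exp u - 1) := by ring
    rw [h1]
    calc 1 + q * (Real.exp u - 1) ≤ Real.exp (q * (Real.exp u - 1)) := hadd _
      _ ≤ Real.exp (q * u + q * u ^ 2) := Real.exp_le_exp.2 (hround u hu)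
  · rw [h]
    have hmu : |(-u)| ≤ 1 := by rwa [abs_neg]
    have h1 : (1 - q) * Real.exp u + (1 - (1 - q)) =
        Real.exp u * (1 + q * (Real.exp (-u) - 1)) := by
      rw [Real.exp_neg]
      have := (Real.exp_pos u).ne'
      field_simp
      ring
    rw [h1]
    calc Real.exp u * (1 + q * (Real.exp (-u) - 1))
        ≤ Real.exp u * Real.exp (q * (Real.exp (-u) - 1)) :=
          mul_le_mul_of_nonneg_left (hadd _) (Real.exp_pos u).le
      _ = Real.exp (u + q * (Real.exp (-u) - 1)) := (Real.exp_add _ _).symm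
      _ ≤ Real.exp ((1 - q) * u + q * u ^ 2) := by
          apply Real.exp_le_exp.2
          have := hround (-u) hmu
          nlinarith [sq_nonneg u]

lemma Ex_bind {α : Type u} {β : Type v} (p : PMF α) (q : α → PMF β) (F : β → ℝ≥0∞) :
    ∑' b, (p.bind q) b * F b = ∑' a, p a * ∑' b, q a b * F b := by
  simp only [PMF.bind_apply]
  have h1 : ∀ b, (∑' a, p a * q a b) * F b = ∑' a, p a * q a b * F b :=
    fun b => (ENNReal.tsum_mul_right).symm
  rw [tsum_congr h1, ENNReal.tsum_comm]
  refine tsum_congr fun a => ?_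
  rw [← ENNReal.tsum_mul_left]
  refine tsum_congr fun b => by ring

lemma Ex_pure {α : Type u} (a : α) (F : α → ℝ≥0∞) :
    ∑' b, (PMF.pure a) b * F b = F a := by
  simp only [PMF.pure_apply]
  rw [tsum_eq_single a] <;> simp +contextual [eq_comm]

lemma Ex_indep {α : Type u} (n : ℕ) (f : Fin n → PMF α) (g : α → ℝ≥0∞) :
    ∑' l, indep n f l * ((l.map g).prod) = ∏ i, ∑' a, f i a * g a := by
  induction n with
  | zero => rw [indep, Ex_pure]; simp
  | succ n ih =>
    rw [indep, Ex_bind, Fin.prod_univ_succ, ← ih (fun i => f i.succ),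
      ← ENNReal.tsum_mul_right]
    refine tsum_congr fun y => ?_
    rw [Ex_bind]
    have h3 : ∀ ys : List α, (indep n fun i => f i.succ) ys *
        (∑' b, (PMF.pure (y :: ys) : PMF (List α)) b * (List.map g b).prod) =
        g y * ((indep n fun i => f i.succ) ys * (List.map g ys).prod) := by
      intro ys
      rw [Ex_pure]
      simp only [List.map_cons, List.prod_cons]
      ring
    rw [tsum_congr h3, ENNReal.tsum_mul_left]
    ring

lemma two_inv_eq : (2:ℝ≥0∞)⁻¹ = ENNReal.ofReal (1/2) := by
  rw [ENNReal.ofReal_div_of_pos (by norm_num)]; simp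

lemma rr_apply {n : ℕ} {lam : ℝ} (hn : 0 < n) (h0 : 0 ≤ lam) (h1 : lam ≤ n) (x y : Bool) :
    rr n lam x y = ENNReal.ofReal (if y = x then 1 - lam / (2 * n) else lam / (2 * n)) := by
  have hnR : (0:ℝ) < n := by exact_mod_cast hn
  have hdiv : (0:ℝ) ≤ lam / n := by positivity
  have hle : lam / n ≤ 1 := by rw [div_le_one hnR]; exact h1
  have hmin : min (ENNReal.ofReal (lam / n)) 1 = ENNReal.ofReal (lam / n) :=
    min_eq_left (by simpa using ENNReal.ofReal_le_ofReal hle)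
  rw [rr, PMF.bind_apply, tsum_bool]
  simp only [if_true, if_false, Bool.false_eq_true, PMF.bernoulli_apply, Bool.cond_true,
    Bool.cond_false]
  simp only [hmin, PMF.bernoulli_apply, cond_true, cond_false]
  have hc : (((bif y then (2⁻¹ : NNReal) else 1 - 2⁻¹) : NNReal) : ℝ≥0∞) =
      ENNReal.ofReal (1 / 2) := by
    rw [← two_inv_eq]; cases y <;> norm_num
  have e1 : (((1 - (ENNReal.ofReal (lam / n)).toNNReal : NNReal)) : ℝ≥0∞) =
      ENNReal.ofReal (1 - lam / n) := by
    rw [ENNReal.coe_sub, ENNReal.coe_toNNReal ENNReal.ofReal_ne_top, ENNReal.coe_one,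
      ← ENNReal.ofReal_one, ← ENNReal.ofReal_sub _ hdiv]
  rw [hc, e1, ENNReal.coe_toNNReal ENNReal.ofReal_ne_top]
  rw [← ENNReal.ofReal_mul hdiv]
  by_cases hxy : y = x
  · rw [if_pos hxy, PMF.pure_apply, if_pos hxy, mul_one,
      ← ENNReal.ofReal_add (by linarith) (by positivity)]
    congr 1
    field_simp
    ring
  · rw [if_neg hxy, PMF.pure_apply, if_neg hxy]
    rw [mul_zero, zero_add]
    congr 1
    field_simp

lemma markov {α : Type u} (p : PMF α) (A : Set α) (g : α → ℝ≥0∞)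
    (h : ∀ a ∈ A, 1 ≤ g a) : p.toOuterMeasure A ≤ ∑' a, p a * g a := by
  rw [PMF.toOuterMeasure_apply]
  refine ENNReal.tsum_le_tsum fun a => ?_
  by_cases ha : a ∈ A
  · rw [Set.indicator_of_mem ha]
    calc p a = p a * 1 := (mul_one _).symm
      _ ≤ p a * g a := mul_le_mul_right (h a ha) _
  · rw [Set.indicator_of_notMem ha]; exact zero_le

lemma list_exp_count (u : ℝ) : ∀ l : List Bool,
    (l.map (fun y => Real.exp (u * (if y then (1:ℝ) else 0)))).prod
      = Real.exp (u * l.count true)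
  | [] => by simp
  | y :: l => by
    rw [List.map_cons, List.prod_cons, list_exp_count u l, ← Real.exp_add, List.count_cons]
    congr 1
    rcases y with _ | _ <;> simp <;> push_cast <;> ring

lemma list_ofReal_prod (h : Bool → ℝ) (hh : ∀ a, 0 ≤ h a) : ∀ l : List Bool,
    (l.map (fun a => ENNReal.ofReal (h a))).prod = ENNReal.ofReal ((l.map h).prod)
  | [] => by simp
  | y :: l => by
    rw [List.map_cons, List.prod_cons, List.map_cons, List.prod_cons,
      list_ofReal_prod h hh l, ← ENNReal.ofReal_mul (hh y)]

lemma chernoff_side (n : ℕ) (lam : ℝ) (x : Fin n → Bool) (hn : 0 < n)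
    (h0 : 0 < lam) (h2 : lam < n) (s t : ℝ) (hs0 : 0 < s) (hs1 : s ≤ 1)
    (σ : ℝ) (hσ : σ = 1 ∨ σ = -1) :
    (indep n fun i => rr n lam (x i)).toOuterMeasure
      {l : List Bool | t < σ * ((l.count true : ℝ)
        - ∑ i, (if x i then 1 - lam / (2 * n) else lam / (2 * n)))} ≤
    ENNReal.ofReal (Real.exp (lam * s ^ 2 / 2 - s * t)) := by
  classical
  have hnR : (0:ℝ) < n := by exact_mod_cast hn
  set q : ℝ := lam / (2 * n) with hq
  have hq0 : 0 ≤ q := by positivity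
  have hq1 : q ≤ 1/2 := by rw [hq, div_le_div_iff₀ (by positivity) (by norm_num)]; nlinarith
  set μ : ℝ := ∑ i, (if x i then 1 - q else q) with hμ
  have hifpos : ∀ b : Bool, 0 ≤ (if b then 1 - q else q) := by
    intro b; split <;> linarith
  set u : ℝ := σ * s with hu
  have hu1 : |u| ≤ 1 := by
    rcases hσ with rfl | rfl <;> rw [hu]
    · rw [one_mul, abs_of_nonneg hs0.le]; exact hs1
    · rw [neg_one_mul, abs_neg, abs_of_nonneg hs0.le]; exact hs1
  have hu2 : u ^ 2 = s ^ 2 := by rcases hσ with rfl | rfl <;> rw [hu] <;> ring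
  set h : Bool → ℝ := fun y => Real.exp (u * (if y then (1:ℝ) else 0)) with hh
  have hhpos : ∀ a, 0 ≤ h a := fun a => (Real.exp_pos _).le
  set C : ℝ := Real.exp (-u * μ - s * t) with hC
  have step1 : (indep n fun i => rr n lam (x i)).toOuterMeasure
      {l : List Bool | t < σ * ((l.count true : ℝ) - μ)} ≤
      ∑' l, (indep n fun i => rr n lam (x i)) l *
        (ENNReal.ofReal C * (l.map (fun a => ENNReal.ofReal (h a))).prod) := by
    apply markov
    intro l hl
    rw [list_ofReal_prod h hhpos, list_exp_count, ← ENNReal.ofReal_mul (Real.exp_pos _).le,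
      ← Real.exp_add]
    rw [Set.mem_setOf_eq] at hl
    have hle : 0 ≤ -u * μ - s * t + u * (l.count true : ℝ) := by
      have h1 : s * t < s * (σ * ((l.count true : ℝ) - μ)) :=
        (mul_lt_mul_iff_right₀ hs0).2 hl
      have h2 : s * (σ * ((l.count true : ℝ) - μ)) = u * (l.count true : ℝ) - u * μ := by
        rw [hu]; ring
      linarith
    calc (1:ℝ≥0∞) = ENNReal.ofReal (Real.exp 0) := by simp
      _ ≤ _ := ENNReal.ofReal_le_ofReal (Real.exp_le_exp.2 hle)
  have step2 : ∑' l, (indep n fun i => rr n lam (x i)) l *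
        (ENNReal.ofReal C * (l.map (fun a => ENNReal.ofReal (h a))).prod) =
      ENNReal.ofReal C * ∏ i, ∑' a, rr n lam (x i) a * ENNReal.ofReal (h a) := by
    rw [← Ex_indep n (fun i => rr n lam (x i)) (fun a => ENNReal.ofReal (h a)),
      ← ENNReal.tsum_mul_left]
    exact tsum_congr fun l => by ring
  have hA : (0:ℝ) ≤ lam / (2*(n:ℝ)) := by positivity
  have hB : lam / (2*(n:ℝ)) ≤ 1/2 := by
    rw [div_le_div_iff₀ (by positivity) (by norm_num)]; nlinarith
  have hifpos2 : ∀ y z : Bool,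
      0 ≤ (if y = z then 1 - lam / (2*(n:ℝ)) else lam / (2*(n:ℝ))) := by
    intro y z; split
    · linarith
    · exact hA
  have factor_eq : ∀ i : Fin n, (∑' a, rr n lam (x i) a * ENNReal.ofReal (h a)) =
      ENNReal.ofReal ((if x i then 1 - q else q) * Real.exp u
        + (1 - (if x i then 1 - q else q))) := by
    intro i
    rw [tsum_bool, rr_apply hn h0.le h2.le, rr_apply hn h0.le h2.le,
      ← ENNReal.ofReal_mul (hifpos2 _ _), ← ENNReal.ofReal_mul (hifpos2 _ _),
      ← ENNReal.ofReal_add (mul_nonneg (hifpos2 _ _) (hhpos _))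
        (mul_nonneg (hifpos2 _ _) (hhpos _))]
    congr 1
    rcases hxi : x i with _ | _ <;> (simp [hh, hq, hxi]; ring)
  have factor_le : ∀ i : Fin n,
      ENNReal.ofReal ((if x i then 1 - q else q) * Real.exp u
        + (1 - (if x i then 1 - q else q))) ≤
      ENNReal.ofReal (Real.exp ((if x i then 1 - q else q) * u + q * u ^ 2)) := by
    intro i
    apply ENNReal.ofReal_le_ofReal
    apply key_factor hq0 hu1
    rcases x i with _ | _ <;> simp
  have step3 : ENNReal.ofReal C * (∏ i, ∑' a, rr n lam (x i) a * ENNReal.ofReal (h a)) ≤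
      ENNReal.ofReal C *
        ∏ i, ENNReal.ofReal (Real.exp ((if x i then 1 - q else q) * u + q * u ^ 2)) := by
    apply mul_le_mul_right
    apply Finset.prod_le_prod'
    intro i _
    rw [factor_eq i]
    exact factor_le i
  have step4 : ENNReal.ofReal C *
      (∏ i, ENNReal.ofReal (Real.exp ((if x i then 1 - q else q) * u + q * u ^ 2))) =
      ENNReal.ofReal (Real.exp (lam * s ^ 2 / 2 - s * t)) := by
    rw [← ENNReal.ofReal_prod_of_nonneg (fun i _ => (Real.exp_pos _).le),
      ← Real.exp_sum, ← ENNReal.ofReal_mul (Real.exp_pos _).le, ← Real.exp_add]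
    congr 1
    rw [Finset.sum_add_distrib, ← Finset.sum_mul, ← hμ, Finset.sum_const, Finset.card_univ,
      Fintype.card_fin, nsmul_eq_mul, hu2]
    have hnq : (n:ℝ) * (q * s ^ 2) = lam * s ^ 2 / 2 := by
      rw [hq]; field_simp
    congr 1
    linarith [hnq]
  rw [step2] at step1
  exact step1.trans (step3.trans step4.le)

end Stmt8Aux

/-- accuracy of the bit-sum protocol: for `2 ln(2/β) ≤ λ < n`,
`Pr[|P_{n,λ}(x) - ∑ x_i| > √(2λ ln(2/β)) · n/(n-λ)] ≤ β`. -/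
theorem stmt8 (n : ℕ) (beta : ℝ) (hbeta : beta ∈ Set.Ioo (0 : ℝ) 1) (lam : ℝ)
    (h1 : 2 * Real.log (2 / beta) ≤ lam) (h2 : lam < n) (x : Fin n → Bool) :
    (bitSumOutput n lam x).toOuterMeasure
        {z | Real.sqrt (2 * lam * Real.log (2 / beta)) * ((n : ℝ) / (n - lam)) <
          |z - ∑ i, (if x i then (1 : ℝ) else 0)|} ≤
      ENNReal.ofReal beta := by
  classical
  obtain ⟨hb0, hb1⟩ := hbeta
  set L : ℝ := Real.log (2 / beta) with hL
  have hLpos : 0 < L := Real.log_pos (by rw [lt_div_iff₀ hb0]; linarith)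
  have hlam : 0 < lam := by linarith
  have hnR : lam < (n:ℝ) := h2
  have hnpos : (0:ℝ) < n := lt_trans hlam hnR
  have hn : 0 < n := by exact_mod_cast hnpos
  set t : ℝ := Real.sqrt (2 * lam * L) with ht
  have ht2 : t ^ 2 = 2 * lam * L := Real.sq_sqrt (by positivity)
  have htpos : 0 < t := Real.sqrt_pos.2 (by positivity)
  set s : ℝ := t / lam with hs
  have hs0 : 0 < s := by positivity
  have hs1 : s ≤ 1 := by
    rw [hs, div_le_one hlam]
    have : t ≤ Real.sqrt (lam ^ 2) := Real.sqrt_le_sqrt (by nlinarith)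
    simpa [Real.sqrt_sq hlam.le] using this
  have hexp : lam * s ^ 2 / 2 - s * t = -L := by
    rw [hs]
    field_simp
    nlinarith [ht2]
  have hval : Real.exp (lam * s ^ 2 / 2 - s * t) = beta / 2 := by
    rw [hexp, Real.exp_neg, hL, Real.exp_log (by positivity), inv_div]
  set μ : ℝ := ∑ i, (if x i then 1 - lam / (2 * (n:ℝ)) else lam / (2 * (n:ℝ))) with hμdef
  set S : ℝ := ∑ i, (if x i then (1:ℝ) else 0) with hS
  have hμ : μ = lam / 2 + S * (((n:ℝ) - lam) / n) := by
    have point : ∀ i : Fin n, (if x i then 1 - lam / (2 * (n:ℝ)) else lam / (2 * (n:ℝ)))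
        = (if x i then (1:ℝ) else 0) * (((n:ℝ) - lam) / n) + lam / (2 * (n:ℝ)) := by
      intro i
      rcases x i with _ | _ <;> simp <;> field_simp <;> ring
    rw [hμdef, Finset.sum_congr rfl (fun i _ => point i), Finset.sum_add_distrib,
      ← Finset.sum_mul, ← hS, Finset.sum_const, Finset.card_univ, Fintype.card_fin,
      nsmul_eq_mul]
    have hc : (n:ℝ) * (lam / (2 * (n:ℝ))) = lam / 2 := by field_simp
    rw [hc]; ring
  set κ : ℝ := (n:ℝ) / ((n:ℝ) - lam) with hκ
  have hκpos : 0 < κ := by rw [hκ]; exact div_pos hnpos (by linarith)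
  have hpre : (fun l : List Bool => κ * ((l.count true : ℝ) - lam / 2)) ⁻¹'
      {z | t * κ < |z - S|} =
      {l : List Bool | t < 1 * ((l.count true : ℝ) - μ)} ∪
      {l : List Bool | t < (-1) * ((l.count true : ℝ) - μ)} := by
    ext l
    simp only [Set.mem_preimage, Set.mem_setOf_eq, Set.mem_union]
    have harg : κ * ((l.count true : ℝ) - lam / 2) - S = κ * ((l.count true : ℝ) - μ) := by
      have hSκ : S = κ * (μ - lam / 2) := by
        have hne1 : ((n:ℝ) - lam) ≠ 0 := by linarith
        have hne2 : (n:ℝ) ≠ 0 := by linarith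
        rw [hμ, hκ]
        field_simp
        ring
      rw [hSκ]; ring
    rw [harg, abs_mul, abs_of_pos hκpos, mul_comm t κ, mul_lt_mul_iff_right₀ hκpos, lt_abs]
    constructor
    · rintro (h | h)
      exacts [Or.inl (by linarith), Or.inr (by linarith)]
    · rintro (h | h)
      exacts [Or.inl (by linarith), Or.inr (by linarith)]
  have hbound := chernoff_side n lam x hn hlam h2 s t hs0 hs1
  rw [bitSumOutput, PMF.toOuterMeasure_map_apply]
  rw [show {z : ℝ | Real.sqrt (2 * lam * L) * ((n : ℝ) / (n - lam)) < |z - S|}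
      = {z : ℝ | t * κ < |z - S|} by rw [ht, hκ]]
  rw [hpre]
  refine le_trans (MeasureTheory.measure_union_le _ _) ?_
  have b1 := hbound 1 (Or.inl rfl)
  have b2 := hbound (-1) (Or.inr rfl)
  rw [hval] at b1 b2
  calc _ ≤ ENNReal.ofReal (beta / 2) + ENNReal.ofReal (beta / 2) := add_le_add b1 b2
    _ = ENNReal.ofReal beta := by
        rw [← ENNReal.ofReal_add (by linarith) (by linarith)]
        norm_num


end ShuffledDP
end
end
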